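/- Removing the larger member of each twin prime pair from the set of primes leaves an infinite set: the set of primes p such that p - 2 is not prime is infinite. -/

import Mathlib

theorem stmt_16 :
    {p : ℕ | p.Prime ∧ (p ≤ 2 ∨ ¬ (p - 2).Prime)}.Infinite := by
  have h : ({p : ℕ | p.Prime ∧ (p : ZMod 3) = 2} \ {5}).Infinite :=
    (Nat.infinite_setOfPred_prime_and_eq_mod (by decide)).diff (Set.finite_singleton 5)
  apply Set.Infinite.mono _ h
  rintro p ⟨⟨hp, hmod⟩, hne⟩
  simp only [Set.mem_singleton_iff] at hne
  refine ⟨hp, ?_⟩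
  by_cases hle : p ≤ 2
  · exact Or.inl hle
  · right
    intro hpr
    have h3 : (3 : ℕ) ∣ p - 2 := by
      have : ((p - 2 : ℕ) : ZMod 3) = 0 := by
        push_cast [Nat.cast_sub (by omega : 2 ≤ p)]
        rw [hmod]; ring
      exact (ZMod.natCast_eq_zero_iff _ _).mp this
    have := (Nat.Prime.eq_one_or_self_of_dvd hpr 3 h3).resolve_left (by norm_num)
    omega
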